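/- For every i, j ∈ {1,…,n}, the mixed second moments under π_{m−1} satisfy Σ_{s ∈ {c,d,u}} Σ_{r ∈ {c,d,u}} E_{π_{m−1}}[x^s_i · x^r_j] = α_{i,j} + β_{i,2} γ_j + β_{j,2} γ_i + ψ_{i,j}, where γ_i = p_i (1/μ^d_i + 1/μ^u_i); β_{i,2} = Σ_{k=1}^{m−2} (p_i/μ^c_i)^k · Z(m−2−k)/Z(m−1); α_{i,i} = Σ_{k=1}^{m−1} (2k−1)(p_i/μ^c_i)^k · Z(m−1−k)/Z(m−1) and, for i ≠ j, α_{i,j} = Σ_{k ≥ 1, ℓ ≥ 1, k+ℓ ≤ m−1} (p_i/μ^c_i)^k (p_j/μ^c_j)^ℓ · Z(m−1−k−ℓ)/Z(m−1); and ψ_{i,j} = (γ_i/Z(m−1)) · (γ_j Z(m−3) + 1{i=j} Z(m−2)). -/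

import Mathlib

open scoped BigOperators

/-- A state of the closed queueing network: numbers of tasks at each client's
downlink (`d`), computation (`c`), and uplink (`u`) servers. -/
structure St (n : ℕ) where
  d : Fin n → ℕ
  c : Fin n → ℕ
  u : Fin n → ℕ

namespace St

variable {n : ℕ}

/-- Total number of tasks in a state. -/
def total (x : St n) : ℕ := ∑ i, (x.d i + x.c i + x.u i)

/-- Product-form weight of a state. -/
noncomputable def w (p μc μd μu : Fin n → ℝ) (x : St n) : ℝ :=
  ∏ i,
    (p i / μc i) ^ x.c i *
      ((p i / μd i) ^ x.d i / (Nat.factorial (x.d i) : ℝ)) *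
      ((p i / μu i) ^ x.u i / (Nat.factorial (x.u i) : ℝ))

/-- Normalizing constant `Z(k)` (it vanishes for `k < 0`). -/
noncomputable def Z (p μc μd μu : Fin n → ℝ) (k : ℤ) : ℝ :=
  ∑' x : St n, if (total x : ℤ) = k then w p μc μd μu x else 0

/-- Product-form distribution `π_k`. -/
noncomputable def pd (p μc μd μu : Fin n → ℝ) (k : ℤ) (x : St n) : ℝ :=
  w p μc μd μu x / Z p μc μd μu k

/-- Expectation of `f` under the product-form distribution `π_k`. -/
noncomputable def Epi (p μc μd μu : Fin n → ℝ) (k : ℤ) (f : St n → ℝ) : ℝ :=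
  ∑' x : St n, if (total x : ℤ) = k then f x * pd p μc μd μu k x else 0

end St

open St

/-- The three coordinate blocks `c`, `d`, `u` of a state, indexed by `Fin 3`. -/
def coord {n : ℕ} (s : Fin 3) (x : St n) (i : Fin n) : ℕ :=
  if s = 0 then x.c i else if s = 1 then x.d i else x.u i


namespace StAux

variable {n : ℕ}

def eqv : St n ≃ (Fin n → ℕ) × (Fin n → ℕ) × (Fin n → ℕ) where
  toFun x := (x.d, x.c, x.u)
  invFun v := ⟨v.1, v.2.1, v.2.2⟩
  left_inv x := rfl
  right_inv v := rfl

instance : DecidableEq (St n) := (eqv (n := n)).decidableEq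

lemma ext' {x y : St n} (hd : x.d = y.d) (hc : x.c = y.c) (hu : x.u = y.u) : x = y := by
  cases x; cases y; simp_all

/-- finset of states with total = k -/
noncomputable def SB (k : ℕ) : Finset (St n) :=
  ((Finset.Iic (fun _ => k) ×ˢ Finset.Iic (fun _ => k) ×ˢ Finset.Iic (fun _ => k)).map
    (eqv (n := n)).symm.toEmbedding).filter (fun x => total x = k)

lemma coord_le_total (x : St n) (i : Fin n) :
    x.d i ≤ total x ∧ x.c i ≤ total x ∧ x.u i ≤ total x := by
  have h : x.d i + x.c i + x.u i ≤ total x :=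
    Finset.single_le_sum (f := fun i' => x.d i' + x.c i' + x.u i') (fun _ _ => Nat.zero_le _)
      (Finset.mem_univ i)
  omega

lemma mem_SB {x : St n} {k : ℕ} : x ∈ SB k ↔ total x = k := by
  constructor
  · intro h; exact (Finset.mem_filter.mp h).2
  · intro h
    refine Finset.mem_filter.mpr ⟨?_, h⟩
    refine Finset.mem_map.mpr ⟨(x.d, x.c, x.u), ?_, rfl⟩
    have := coord_le_total x
    subst h
    simp only [Finset.mem_product, Finset.mem_Iic, Pi.le_def]
    exact ⟨fun i => (coord_le_total x i).1,
      fun i => (coord_le_total x i).2.1, fun i => (coord_le_total x i).2.2⟩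

end StAux

namespace StAux

variable {n : ℕ} (p μc μd μu : Fin n → ℝ)

lemma w_pos (hp : ∀ i, 0 < p i) (hμc : ∀ i, 0 < μc i) (hμd : ∀ i, 0 < μd i)
    (hμu : ∀ i, 0 < μu i) (x : St n) : 0 < w p μc μd μu x := by
  rw [w]
  refine Finset.prod_pos fun i _ => ?_
  have h1 := hp i; have h2 := hμc i; have h3 := hμd i; have h4 := hμu i
  have f1 := Nat.factorial_pos (x.d i); have f2 := Nat.factorial_pos (x.u i)
  positivity

lemma Z_ofNat (k : ℕ) : Z p μc μd μu (k : ℤ) = ∑ x ∈ SB k, w p μc μd μu x := by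
  rw [Z, tsum_eq_sum (s := SB k) ?_]
  · exact Finset.sum_congr rfl fun x hx => if_pos (by exact_mod_cast mem_SB.mp hx)
  · intro x hx
    exact if_neg fun hc => hx (mem_SB.mpr (by exact_mod_cast hc))

lemma Z_neg {k : ℤ} (hk : k < 0) : Z p μc μd μu k = 0 := by
  rw [Z]
  convert tsum_zero with x
  exact if_neg (by intro h; omega)

lemma Epi_eq (k : ℕ) (f : St n → ℝ) :
    Epi p μc μd μu (k : ℤ) f =
      (∑ x ∈ SB k, f x * w p μc μd μu x) / Z p μc μd μu (k : ℤ) := by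
  rw [Epi, tsum_eq_sum (s := SB k) ?_]
  · rw [Finset.sum_div]
    refine Finset.sum_congr rfl fun x hx => ?_
    rw [if_pos (by exact_mod_cast mem_SB.mp hx), pd, mul_div_assoc]
  · intro x hx
    exact if_neg fun hc => hx (mem_SB.mpr (by exact_mod_cast hc))

def cAdd (i : Fin n) (k : ℕ) (x : St n) : St n :=
  ⟨x.d, Function.update x.c i (x.c i + k), x.u⟩

def cSub (i : Fin n) (k : ℕ) (x : St n) : St n :=
  ⟨x.d, Function.update x.c i (x.c i - k), x.u⟩

def dAdd (i : Fin n) (x : St n) : St n :=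
  ⟨Function.update x.d i (x.d i + 1), x.c, x.u⟩

def dSub (i : Fin n) (x : St n) : St n :=
  ⟨Function.update x.d i (x.d i - 1), x.c, x.u⟩

def uAdd (i : Fin n) (x : St n) : St n :=
  ⟨x.d, x.c, Function.update x.u i (x.u i + 1)⟩

def uSub (i : Fin n) (x : St n) : St n :=
  ⟨x.d, x.c, Function.update x.u i (x.u i - 1)⟩

lemma total_eq (x : St n) :
    total x = (∑ i, x.d i) + (∑ i, x.c i) + (∑ i, x.u i) := by
  rw [total, Finset.sum_add_distrib, Finset.sum_add_distrib]

lemma sum_update_nat (f : Fin n → ℕ) (i : Fin n) (v : ℕ) :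
    ∑ i', Function.update f i v i' = ∑ i', f i' + v - f i := by
  rw [Finset.sum_update_of_mem (Finset.mem_univ i), Finset.sdiff_singleton_eq_erase,
    ← Finset.add_sum_erase _ f (Finset.mem_univ i)]
  have := Finset.single_le_sum (f := f) (fun _ _ => Nat.zero_le _) (Finset.mem_univ i)
  omega

lemma total_cAdd (i : Fin n) (k : ℕ) (x : St n) : total (cAdd i k x) = total x + k := by
  simp only [total_eq, cAdd, sum_update_nat]
  have := Finset.single_le_sum (f := x.c) (fun _ _ => Nat.zero_le _) (Finset.mem_univ i)
  omega

lemma total_dAdd (i : Fin n) (x : St n) : total (dAdd i x) = total x + 1 := by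
  simp only [total_eq, dAdd, sum_update_nat]
  have := Finset.single_le_sum (f := x.d) (fun _ _ => Nat.zero_le _) (Finset.mem_univ i)
  omega

lemma total_uAdd (i : Fin n) (x : St n) : total (uAdd i x) = total x + 1 := by
  simp only [total_eq, uAdd, sum_update_nat]
  have := Finset.single_le_sum (f := x.u) (fun _ _ => Nat.zero_le _) (Finset.mem_univ i)
  omega

lemma poisson_step (r : ℝ) (d : ℕ) :
    ((d : ℝ) + 1) * (r ^ (d + 1) / (Nat.factorial (d + 1) : ℝ)) =
      r * (r ^ d / (Nat.factorial d : ℝ)) := by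
  have hfac : (Nat.factorial d : ℝ) ≠ 0 := by exact_mod_cast (Nat.factorial_pos d).ne'
  have hd1 : ((d : ℝ) + 1) ≠ 0 := by positivity
  rw [Nat.factorial_succ, pow_succ]
  push_cast
  field_simp

lemma w_cAdd (i : Fin n) (k : ℕ) (x : St n) :
    w p μc μd μu (cAdd i k x) = (p i / μc i) ^ k * w p μc μd μu x := by
  rw [w, w]
  rw [← Finset.mul_prod_erase _ _ (Finset.mem_univ i),
      ← Finset.mul_prod_erase _ _ (Finset.mem_univ i)]
  have herase : ∀ i' ∈ Finset.univ.erase i,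
      (p i' / μc i') ^ (cAdd i k x).c i' *
        ((p i' / μd i') ^ (cAdd i k x).d i' / (Nat.factorial ((cAdd i k x).d i') : ℝ)) *
        ((p i' / μu i') ^ (cAdd i k x).u i' / (Nat.factorial ((cAdd i k x).u i') : ℝ)) =
      (p i' / μc i') ^ x.c i' *
        ((p i' / μd i') ^ x.d i' / (Nat.factorial (x.d i') : ℝ)) *
        ((p i' / μu i') ^ x.u i' / (Nat.factorial (x.u i') : ℝ)) := by
    intro i' hi'
    have hne : i' ≠ i := (Finset.mem_erase.mp hi').1
    simp [cAdd, Function.update_of_ne hne]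
  rw [Finset.prod_congr rfl herase]
  have : (cAdd i k x).c i = x.c i + k := by simp [cAdd]
  simp only [cAdd] at this ⊢
  rw [Function.update_self]
  ring

lemma w_dAdd (i : Fin n) (x : St n) :
    ((x.d i : ℝ) + 1) * w p μc μd μu (dAdd i x) = (p i / μd i) * w p μc μd μu x := by
  rw [w, w]
  rw [← Finset.mul_prod_erase _ _ (Finset.mem_univ i),
      ← Finset.mul_prod_erase _ _ (Finset.mem_univ i)]
  have herase : ∀ i' ∈ Finset.univ.erase i,
      (p i' / μc i') ^ (dAdd i x).c i' *
        ((p i' / μd i') ^ (dAdd i x).d i' / (Nat.factorial ((dAdd i x).d i') : ℝ)) *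
        ((p i' / μu i') ^ (dAdd i x).u i' / (Nat.factorial ((dAdd i x).u i') : ℝ)) =
      (p i' / μc i') ^ x.c i' *
        ((p i' / μd i') ^ x.d i' / (Nat.factorial (x.d i') : ℝ)) *
        ((p i' / μu i') ^ x.u i' / (Nat.factorial (x.u i') : ℝ)) := by
    intro i' hi'
    have hne : i' ≠ i := (Finset.mem_erase.mp hi').1
    simp [dAdd, Function.update_of_ne hne]
  rw [Finset.prod_congr rfl herase]
  simp only [dAdd]
  rw [Function.update_self]
  have hfac : (Nat.factorial (x.d i) : ℝ) ≠ 0 := by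
    exact_mod_cast (Nat.factorial_pos (x.d i)).ne'
  have hd1 : ((x.d i : ℝ) + 1) ≠ 0 := by positivity
  have key : ((x.d i : ℝ) + 1) *
      ((p i / μc i) ^ x.c i *
        ((p i / μd i) ^ (x.d i + 1) / (Nat.factorial (x.d i + 1) : ℝ)) *
        ((p i / μu i) ^ x.u i / (Nat.factorial (x.u i) : ℝ))) =
      (p i / μd i) *
      ((p i / μc i) ^ x.c i *
        ((p i / μd i) ^ x.d i / (Nat.factorial (x.d i) : ℝ)) *
        ((p i / μu i) ^ x.u i / (Nat.factorial (x.u i) : ℝ))) := by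
    linear_combination ((p i / μc i) ^ x.c i *
      ((p i / μu i) ^ x.u i / (Nat.factorial (x.u i) : ℝ))) *
      poisson_step (p i / μd i) (x.d i)
  linear_combination (∏ i' ∈ Finset.univ.erase i,
      (p i' / μc i') ^ x.c i' *
        ((p i' / μd i') ^ x.d i' / (Nat.factorial (x.d i') : ℝ)) *
        ((p i' / μu i') ^ x.u i' / (Nat.factorial (x.u i') : ℝ))) * key

lemma w_uAdd (i : Fin n) (x : St n) :
    ((x.u i : ℝ) + 1) * w p μc μd μu (uAdd i x) = (p i / μu i) * w p μc μd μu x := by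
  rw [w, w]
  rw [← Finset.mul_prod_erase _ _ (Finset.mem_univ i),
      ← Finset.mul_prod_erase _ _ (Finset.mem_univ i)]
  have herase : ∀ i' ∈ Finset.univ.erase i,
      (p i' / μc i') ^ (uAdd i x).c i' *
        ((p i' / μd i') ^ (uAdd i x).d i' / (Nat.factorial ((uAdd i x).d i') : ℝ)) *
        ((p i' / μu i') ^ (uAdd i x).u i' / (Nat.factorial ((uAdd i x).u i') : ℝ)) =
      (p i' / μc i') ^ x.c i' *
        ((p i' / μd i') ^ x.d i' / (Nat.factorial (x.d i') : ℝ)) *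
        ((p i' / μu i') ^ x.u i' / (Nat.factorial (x.u i') : ℝ)) := by
    intro i' hi'
    have hne : i' ≠ i := (Finset.mem_erase.mp hi').1
    simp [uAdd, Function.update_of_ne hne]
  rw [Finset.prod_congr rfl herase]
  simp only [uAdd]
  rw [Function.update_self]
  have hfac : (Nat.factorial (x.u i) : ℝ) ≠ 0 := by
    exact_mod_cast (Nat.factorial_pos (x.u i)).ne'
  have hd1 : ((x.u i : ℝ) + 1) ≠ 0 := by positivity
  have key : ((x.u i : ℝ) + 1) *
      ((p i / μc i) ^ x.c i *
        ((p i / μd i) ^ x.d i / (Nat.factorial (x.d i) : ℝ)) *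
        ((p i / μu i) ^ (x.u i + 1) / (Nat.factorial (x.u i + 1) : ℝ))) =
      (p i / μu i) *
      ((p i / μc i) ^ x.c i *
        ((p i / μd i) ^ x.d i / (Nat.factorial (x.d i) : ℝ)) *
        ((p i / μu i) ^ x.u i / (Nat.factorial (x.u i) : ℝ))) := by
    linear_combination ((p i / μc i) ^ x.c i *
      ((p i / μd i) ^ x.d i / (Nat.factorial (x.d i) : ℝ))) *
      poisson_step (p i / μu i) (x.u i)
  linear_combination (∏ i' ∈ Finset.univ.erase i,
      (p i' / μc i') ^ x.c i' *
        ((p i' / μd i') ^ x.d i' / (Nat.factorial (x.d i') : ℝ)) *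
        ((p i' / μu i') ^ x.u i' / (Nat.factorial (x.u i') : ℝ))) * key

end StAux

namespace StAux

variable {n : ℕ} (p μc μd μu : Fin n → ℝ)

lemma cSub_cAdd (i : Fin n) (k : ℕ) (y : St n) : cSub i k (cAdd i k y) = y := by
  refine ext' rfl ?_ rfl
  funext i'
  by_cases h : i' = i
  · subst h; simp [cSub, cAdd]
  · simp [cSub, cAdd, Function.update_of_ne h]

lemma cAdd_cSub (i : Fin n) (k : ℕ) (x : St n) (h : k ≤ x.c i) :
    cAdd i k (cSub i k x) = x := by
  refine ext' rfl ?_ rfl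
  funext i'
  by_cases h' : i' = i
  · subst h'; simp [cSub, cAdd]; omega
  · simp [cSub, cAdd, Function.update_of_ne h']

lemma dSub_dAdd (i : Fin n) (y : St n) : dSub i (dAdd i y) = y := by
  refine ext' ?_ rfl rfl
  funext i'
  by_cases h : i' = i
  · subst h; simp [dSub, dAdd]
  · simp [dSub, dAdd, Function.update_of_ne h]

lemma dAdd_dSub (i : Fin n) (x : St n) (h : 1 ≤ x.d i) : dAdd i (dSub i x) = x := by
  refine ext' ?_ rfl rfl
  funext i'
  by_cases h' : i' = i
  · subst h'; simp [dSub, dAdd]; omega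
  · simp [dSub, dAdd, Function.update_of_ne h']

lemma uSub_uAdd (i : Fin n) (y : St n) : uSub i (uAdd i y) = y := by
  refine ext' rfl rfl ?_
  funext i'
  by_cases h : i' = i
  · subst h; simp [uSub, uAdd]
  · simp [uSub, uAdd, Function.update_of_ne h]

lemma uAdd_uSub (i : Fin n) (x : St n) (h : 1 ≤ x.u i) : uAdd i (uSub i x) = x := by
  refine ext' rfl rfl ?_
  funext i'
  by_cases h' : i' = i
  · subst h'; simp [uSub, uAdd]; omega
  · simp [uSub, uAdd, Function.update_of_ne h']

lemma cAdd_c (i : Fin n) (k : ℕ) (y : St n) : (cAdd i k y).c i = y.c i + k := by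
  simp [cAdd]

lemma sum_cshift (i : Fin n) (k K : ℕ) (f : St n → ℝ) :
    ∑ x ∈ SB (K + k), (if k ≤ x.c i then f x * w p μc μd μu x else 0) =
      (p i / μc i) ^ k * ∑ y ∈ SB K, f (cAdd i k y) * w p μc μd μu y := by
  rw [Finset.mul_sum, ← Finset.sum_filter]
  rw [Finset.sum_congr rfl (fun y hy =>
    show (p i / μc i) ^ k * (f (cAdd i k y) * w p μc μd μu y) =
      f (cAdd i k y) * w p μc μd μu (cAdd i k y) by rw [w_cAdd]; ring)]
  refine Finset.sum_nbij' (cSub i k) (cAdd i k) ?_ ?_ ?_ ?_ ?_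
  · intro x hx
    obtain ⟨hx1, hx2⟩ := Finset.mem_filter.mp hx
    have ht : total x = K + k := mem_SB.mp hx1
    have h2 : total (cAdd i k (cSub i k x)) = total (cSub i k x) + k := total_cAdd i k _
    rw [cAdd_cSub i k x hx2] at h2
    exact mem_SB.mpr (by omega)
  · intro y hy
    refine Finset.mem_filter.mpr ⟨mem_SB.mpr ?_, ?_⟩
    · rw [total_cAdd, mem_SB.mp hy]
    · rw [cAdd_c]; omega
  · intro x hx
    exact cAdd_cSub i k x (Finset.mem_filter.mp hx).2
  · intro y _
    exact cSub_cAdd i k y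
  · intro x hx
    rw [cAdd_cSub i k x (Finset.mem_filter.mp hx).2]

lemma sum_dshift (i : Fin n) (K : ℕ) (f : St n → ℝ) :
    ∑ x ∈ SB (K + 1), (x.d i : ℝ) * f x * w p μc μd μu x =
      (p i / μd i) * ∑ y ∈ SB K, f (dAdd i y) * w p μc μd μu y := by
  rw [Finset.mul_sum]
  rw [Finset.sum_congr rfl (fun y hy =>
    show (p i / μd i) * (f (dAdd i y) * w p μc μd μu y) =
      f (dAdd i y) * (((y.d i : ℝ) + 1) * w p μc μd μu (dAdd i y)) by
        rw [w_dAdd]; ring)]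
  rw [Finset.sum_congr rfl (fun x _ =>
    show (x.d i : ℝ) * f x * w p μc μd μu x =
      if 1 ≤ x.d i then (x.d i : ℝ) * f x * w p μc μd μu x else 0 by
        by_cases h : 1 ≤ x.d i
        · rw [if_pos h]
        · rw [if_neg h]
          have : x.d i = 0 := by omega
          rw [this]; push_cast; ring)]
  rw [← Finset.sum_filter]
  refine Finset.sum_nbij' (dSub i) (dAdd i) ?_ ?_ ?_ ?_ ?_
  · intro x hx
    obtain ⟨hx1, hx2⟩ := Finset.mem_filter.mp hx
    have ht : total x = K + 1 := mem_SB.mp hx1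
    have h2 : total (dAdd i (dSub i x)) = total (dSub i x) + 1 := total_dAdd i _
    rw [dAdd_dSub i x hx2] at h2
    exact mem_SB.mpr (by omega)
  · intro y hy
    refine Finset.mem_filter.mpr ⟨mem_SB.mpr ?_, ?_⟩
    · rw [total_dAdd, mem_SB.mp hy]
    · show 1 ≤ (dAdd i y).d i
      simp [dAdd]
  · intro x hx
    exact dAdd_dSub i x (Finset.mem_filter.mp hx).2
  · intro y _
    exact dSub_dAdd i y
  · intro x hx
    have hx2 : 1 ≤ x.d i := (Finset.mem_filter.mp hx).2
    rw [dAdd_dSub i x hx2]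
    have hds : ((dSub i x).d i : ℝ) + 1 = (x.d i : ℝ) := by
      have : (dSub i x).d i = x.d i - 1 := by simp [dSub]
      rw [this]; push_cast [Nat.cast_sub hx2]; ring
    rw [hds]; ring

lemma sum_ushift (i : Fin n) (K : ℕ) (f : St n → ℝ) :
    ∑ x ∈ SB (K + 1), (x.u i : ℝ) * f x * w p μc μd μu x =
      (p i / μu i) * ∑ y ∈ SB K, f (uAdd i y) * w p μc μd μu y := by
  rw [Finset.mul_sum]
  rw [Finset.sum_congr rfl (fun y hy =>
    show (p i / μu i) * (f (uAdd i y) * w p μc μd μu y) =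
      f (uAdd i y) * (((y.u i : ℝ) + 1) * w p μc μd μu (uAdd i y)) by
        rw [w_uAdd]; ring)]
  rw [Finset.sum_congr rfl (fun x _ =>
    show (x.u i : ℝ) * f x * w p μc μd μu x =
      if 1 ≤ x.u i then (x.u i : ℝ) * f x * w p μc μd μu x else 0 by
        by_cases h : 1 ≤ x.u i
        · rw [if_pos h]
        · rw [if_neg h]
          have : x.u i = 0 := by omega
          rw [this]; push_cast; ring)]
  rw [← Finset.sum_filter]
  refine Finset.sum_nbij' (uSub i) (uAdd i) ?_ ?_ ?_ ?_ ?_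
  · intro x hx
    obtain ⟨hx1, hx2⟩ := Finset.mem_filter.mp hx
    have ht : total x = K + 1 := mem_SB.mp hx1
    have h2 : total (uAdd i (uSub i x)) = total (uSub i x) + 1 := total_uAdd i _
    rw [uAdd_uSub i x hx2] at h2
    exact mem_SB.mpr (by omega)
  · intro y hy
    refine Finset.mem_filter.mpr ⟨mem_SB.mpr ?_, ?_⟩
    · rw [total_uAdd, mem_SB.mp hy]
    · show 1 ≤ (uAdd i y).u i
      simp [uAdd]
  · intro x hx
    exact uAdd_uSub i x (Finset.mem_filter.mp hx).2
  · intro y _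
    exact uSub_uAdd i y
  · intro x hx
    have hx2 : 1 ≤ x.u i := (Finset.mem_filter.mp hx).2
    rw [uAdd_uSub i x hx2]
    have hus : ((uSub i x).u i : ℝ) + 1 = (x.u i : ℝ) := by
      have : (uSub i x).u i = x.u i - 1 := by simp [uSub]
      rw [this]; push_cast [Nat.cast_sub hx2]; ring
    rw [hus]; ring

end StAux

namespace StAux

variable {n : ℕ} (p μc μd μu : Fin n → ℝ)

lemma dAdd_d (i j : Fin n) (y : St n) :
    ((dAdd j y).d i : ℝ) = (y.d i : ℝ) + (if i = j then 1 else 0) := by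
  by_cases h : i = j
  · subst h; simp [dAdd]
  · simp [dAdd, Function.update_of_ne h, h]

lemma uAdd_u (i j : Fin n) (y : St n) :
    ((uAdd j y).u i : ℝ) = (y.u i : ℝ) + (if i = j then 1 else 0) := by
  by_cases h : i = j
  · subst h; simp [uAdd]
  · simp [uAdd, Function.update_of_ne h, h]

lemma SB_zero_d {x : St n} (hx : x ∈ SB 0) (i : Fin n) : x.d i = 0 := by
  have h := (coord_le_total x i).1; rw [mem_SB.mp hx] at h; omega

lemma SB_zero_c {x : St n} (hx : x ∈ SB 0) (i : Fin n) : x.c i = 0 := by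
  have h := (coord_le_total x i).2.1; rw [mem_SB.mp hx] at h; omega

lemma SB_zero_u {x : St n} (hx : x ∈ SB 0) (i : Fin n) : x.u i = 0 := by
  have h := (coord_le_total x i).2.2; rw [mem_SB.mp hx] at h; omega

lemma L_d (i : Fin n) (K : ℕ) :
    ∑ x ∈ SB K, (x.d i : ℝ) * w p μc μd μu x =
      (p i / μd i) * Z p μc μd μu ((K : ℤ) - 1) := by
  cases K with
  | zero =>
    rw [Z_neg p μc μd μu (by norm_num), Finset.sum_eq_zero, mul_zero]
    intro x hx
    rw [SB_zero_d hx i]; push_cast; ring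
  | succ K' =>
    rw [show ((K' + 1 : ℕ) : ℤ) - 1 = ((K' : ℕ) : ℤ) by push_cast; ring, Z_ofNat]
    have h := sum_dshift p μc μd μu i K' (fun _ => (1 : ℝ))
    simp only [mul_one, one_mul] at h
    exact h

lemma L_u (i : Fin n) (K : ℕ) :
    ∑ x ∈ SB K, (x.u i : ℝ) * w p μc μd μu x =
      (p i / μu i) * Z p μc μd μu ((K : ℤ) - 1) := by
  cases K with
  | zero =>
    rw [Z_neg p μc μd μu (by norm_num), Finset.sum_eq_zero, mul_zero]
    intro x hx
    rw [SB_zero_u hx i]; push_cast; ring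
  | succ K' =>
    rw [show ((K' + 1 : ℕ) : ℤ) - 1 = ((K' : ℕ) : ℤ) by push_cast; ring, Z_ofNat]
    have h := sum_ushift p μc μd μu i K' (fun _ => (1 : ℝ))
    simp only [mul_one, one_mul] at h
    exact h

lemma L_dd (i j : Fin n) (K : ℕ) :
    ∑ x ∈ SB K, (x.d i : ℝ) * (x.d j : ℝ) * w p μc μd μu x =
      (p i / μd i) * (p j / μd j) * Z p μc μd μu ((K : ℤ) - 2) +
        (if i = j then 1 else 0) * (p j / μd j) * Z p μc μd μu ((K : ℤ) - 1) := by
  cases K with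
  | zero =>
    rw [Z_neg p μc μd μu (by norm_num), Z_neg p μc μd μu (by norm_num),
      Finset.sum_eq_zero]
    · ring
    · intro x hx; rw [SB_zero_d hx i]; push_cast; ring
  | succ K' =>
    have h := sum_dshift p μc μd μu j K' (fun x => (x.d i : ℝ))
    rw [Finset.sum_congr rfl (fun x _ =>
      show (x.d i : ℝ) * (x.d j : ℝ) * w p μc μd μu x =
        (x.d j : ℝ) * (x.d i : ℝ) * w p μc μd μu x by ring), h]
    rw [Finset.sum_congr rfl (fun y _ => by
      rw [dAdd_d i j y] : ∀ y ∈ SB K', (((dAdd j y).d i : ℝ)) * w p μc μd μu y =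
        ((y.d i : ℝ) + (if i = j then 1 else 0)) * w p μc μd μu y)]
    rw [Finset.sum_congr rfl (fun y _ =>
      show ((y.d i : ℝ) + (if i = j then 1 else 0)) * w p μc μd μu y =
        (y.d i : ℝ) * w p μc μd μu y +
          (if i = j then 1 else 0) * w p μc μd μu y by ring)]
    rw [Finset.sum_add_distrib, L_d, ← Finset.mul_sum, ← Z_ofNat]
    rw [show ((K' + 1 : ℕ) : ℤ) - 2 = ((K' : ℕ) : ℤ) - 1 by push_cast; ring,
      show ((K' + 1 : ℕ) : ℤ) - 1 = ((K' : ℕ) : ℤ) by push_cast; ring]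
    ring

end StAux

namespace StAux

variable {n : ℕ} (p μc μd μu : Fin n → ℝ)

lemma L_du (i j : Fin n) (K : ℕ) :
    ∑ x ∈ SB K, (x.d i : ℝ) * (x.u j : ℝ) * w p μc μd μu x =
      (p i / μd i) * (p j / μu j) * Z p μc μd μu ((K : ℤ) - 2) := by
  cases K with
  | zero =>
    rw [Z_neg p μc μd μu (by norm_num), Finset.sum_eq_zero, mul_zero]
    intro x hx; rw [SB_zero_d hx i]; push_cast; ring
  | succ K' =>
    have h := sum_ushift p μc μd μu j K' (fun x => (x.d i : ℝ))
    rw [Finset.sum_congr rfl (fun x _ =>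
      show (x.d i : ℝ) * (x.u j : ℝ) * w p μc μd μu x =
        (x.u j : ℝ) * (x.d i : ℝ) * w p μc μd μu x by ring), h]
    have : ∀ y : St n, ((uAdd j y).d i : ℝ) = (y.d i : ℝ) := fun y => rfl
    simp only [this]
    rw [L_d, show ((K' + 1 : ℕ) : ℤ) - 2 = ((K' : ℕ) : ℤ) - 1 by push_cast; ring]
    ring

lemma L_uu (i j : Fin n) (K : ℕ) :
    ∑ x ∈ SB K, (x.u i : ℝ) * (x.u j : ℝ) * w p μc μd μu x =
      (p i / μu i) * (p j / μu j) * Z p μc μd μu ((K : ℤ) - 2) +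
        (if i = j then 1 else 0) * (p j / μu j) * Z p μc μd μu ((K : ℤ) - 1) := by
  cases K with
  | zero =>
    rw [Z_neg p μc μd μu (by norm_num), Z_neg p μc μd μu (by norm_num),
      Finset.sum_eq_zero]
    · ring
    · intro x hx; rw [SB_zero_u hx i]; push_cast; ring
  | succ K' =>
    have h := sum_ushift p μc μd μu j K' (fun x => (x.u i : ℝ))
    rw [Finset.sum_congr rfl (fun x _ =>
      show (x.u i : ℝ) * (x.u j : ℝ) * w p μc μd μu x =
        (x.u j : ℝ) * (x.u i : ℝ) * w p μc μd μu x by ring), h]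
    rw [Finset.sum_congr rfl (fun y _ => by
      rw [uAdd_u i j y] : ∀ y ∈ SB K', (((uAdd j y).u i : ℝ)) * w p μc μd μu y =
        ((y.u i : ℝ) + (if i = j then 1 else 0)) * w p μc μd μu y)]
    rw [Finset.sum_congr rfl (fun y _ =>
      show ((y.u i : ℝ) + (if i = j then 1 else 0)) * w p μc μd μu y =
        (y.u i : ℝ) * w p μc μd μu y +
          (if i = j then 1 else 0) * w p μc μd μu y by ring)]
    rw [Finset.sum_add_distrib, L_u, ← Finset.mul_sum, ← Z_ofNat]
    rw [show ((K' + 1 : ℕ) : ℤ) - 2 = ((K' : ℕ) : ℤ) - 1 by push_cast; ring,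
      show ((K' + 1 : ℕ) : ℤ) - 1 = ((K' : ℕ) : ℤ) by push_cast; ring]
    ring

lemma L_cind (i : Fin n) (k K : ℕ) :
    ∑ x ∈ SB K, (if k ≤ x.c i then w p μc μd μu x else 0) =
      (p i / μc i) ^ k * Z p μc μd μu ((K : ℤ) - k) := by
  by_cases hk : k ≤ K
  · obtain ⟨K', rfl⟩ : ∃ K', K = K' + k := ⟨K - k, by omega⟩
    rw [show ((K' + k : ℕ) : ℤ) - k = ((K' : ℕ) : ℤ) by push_cast; ring, Z_ofNat]
    have h := sum_cshift p μc μd μu i k K' (fun _ => (1 : ℝ))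
    simp only [one_mul] at h
    exact h
  · rw [Z_neg p μc μd μu (by omega), Finset.sum_eq_zero, mul_zero]
    intro x hx
    rw [if_neg]
    have h2 := (coord_le_total x i).2.1
    rw [mem_SB.mp hx] at h2
    omega

lemma count_le (c K : ℕ) (h : c ≤ K) :
    ∑ k ∈ Finset.Icc 1 K, (if k ≤ c then (1 : ℝ) else 0) = (c : ℝ) := by
  rw [Finset.sum_boole]
  congr 1
  rw [show (Finset.Icc 1 K).filter (fun k => k ≤ c) = Finset.Icc 1 c by
    ext k; simp only [Finset.mem_filter, Finset.mem_Icc]; omega]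
  rw [Nat.card_Icc]
  omega

lemma sum_odd (c : ℕ) :
    ∑ k ∈ Finset.Icc 1 c, (2 * (k : ℝ) - 1) = (c : ℝ) ^ 2 := by
  induction c with
  | zero => simp
  | succ c' ih =>
    rw [Finset.sum_Icc_succ_top (by omega : 1 ≤ c' + 1), ih]
    push_cast; ring

lemma count_sq (c K : ℕ) (h : c ≤ K) :
    ∑ k ∈ Finset.Icc 1 K, ((2 * (k : ℝ) - 1) * if k ≤ c then (1 : ℝ) else 0) =
      (c : ℝ) ^ 2 := by
  rw [← Finset.sum_subset (Finset.Icc_subset_Icc_right h) (fun k hk1 hk2 => by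
    have h1 := Finset.mem_Icc.mp hk1
    have h2 : ¬ (1 ≤ k ∧ k ≤ c) := fun hc => hk2 (Finset.mem_Icc.mpr hc)
    rw [if_neg (by omega), mul_zero])]
  rw [Finset.sum_congr rfl (fun k hk => by
    have h1 := Finset.mem_Icc.mp hk
    rw [if_pos (by omega), mul_one] :
    ∀ k ∈ Finset.Icc 1 c, ((2 * (k : ℝ) - 1) * if k ≤ c then (1 : ℝ) else 0) =
      (2 * (k : ℝ) - 1))]
  exact sum_odd c

end StAux

namespace StAux

variable {n : ℕ} (p μc μd μu : Fin n → ℝ)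

lemma L_c (i : Fin n) (K : ℕ) :
    ∑ x ∈ SB K, (x.c i : ℝ) * w p μc μd μu x =
      ∑ k ∈ Finset.Icc 1 K, (p i / μc i) ^ k * Z p μc μd μu ((K : ℤ) - k) := by
  rw [Finset.sum_congr rfl (fun x hx => by
    have hc : x.c i ≤ K := by
      have h2 := (coord_le_total x i).2.1; rw [mem_SB.mp hx] at h2; exact h2
    rw [← count_le (x.c i) K hc, Finset.sum_mul]
    exact Finset.sum_congr rfl (fun k _ => by
      by_cases h : k ≤ x.c i
      · rw [if_pos h, if_pos h, one_mul]
      · rw [if_neg h, if_neg h, zero_mul] ) :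
    ∀ x ∈ SB K, (x.c i : ℝ) * w p μc μd μu x =
      ∑ k ∈ Finset.Icc 1 K, (if k ≤ x.c i then w p μc μd μu x else 0))]
  rw [Finset.sum_comm]
  exact Finset.sum_congr rfl (fun k _ => L_cind p μc μd μu i k K)

lemma L_cc_eq (i : Fin n) (K : ℕ) :
    ∑ x ∈ SB K, (x.c i : ℝ) * (x.c i : ℝ) * w p μc μd μu x =
      ∑ k ∈ Finset.Icc 1 K, (2 * (k : ℝ) - 1) * (p i / μc i) ^ k *
        Z p μc μd μu ((K : ℤ) - k) := by
  rw [Finset.sum_congr rfl (fun x hx => by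
    have hc : x.c i ≤ K := by
      have h2 := (coord_le_total x i).2.1; rw [mem_SB.mp hx] at h2; exact h2
    rw [show (x.c i : ℝ) * (x.c i : ℝ) = (x.c i : ℝ) ^ 2 by ring,
      ← count_sq (x.c i) K hc, Finset.sum_mul]
    exact Finset.sum_congr rfl (fun k _ => by
      by_cases h : k ≤ x.c i
      · rw [if_pos h, if_pos h, mul_one]
      · rw [if_neg h, if_neg h, mul_zero, zero_mul] ) :
    ∀ x ∈ SB K, (x.c i : ℝ) * (x.c i : ℝ) * w p μc μd μu x =
      ∑ k ∈ Finset.Icc 1 K,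
        (2 * (k : ℝ) - 1) * (if k ≤ x.c i then w p μc μd μu x else 0))]
  rw [Finset.sum_comm]
  refine Finset.sum_congr rfl (fun k _ => ?_)
  rw [← Finset.mul_sum, L_cind p μc μd μu i k K]
  ring

lemma cAdd_c_ne (i j : Fin n) (hij : j ≠ i) (k : ℕ) (y : St n) :
    (cAdd i k y).c j = y.c j := by
  simp [cAdd, Function.update_of_ne hij]

lemma cc_le_total (i j : Fin n) (hij : i ≠ j) (x : St n) :
    x.c i + x.c j ≤ total x := by
  have hsub : ({i, j} : Finset (Fin n)) ⊆ Finset.univ := Finset.subset_univ _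
  have h := Finset.sum_le_sum_of_subset (f := fun i' => x.d i' + x.c i' + x.u i') hsub
  rw [Finset.sum_pair hij] at h
  have h2 : x.c i + x.c j ≤ (x.d i + x.c i + x.u i) + (x.d j + x.c j + x.u j) := by omega
  exact h2.trans h

lemma L_cind2 (i j : Fin n) (hij : i ≠ j) (k l K : ℕ) :
    ∑ x ∈ SB K, (if k ≤ x.c i ∧ l ≤ x.c j then w p μc μd μu x else 0) =
      (p i / μc i) ^ k * ((p j / μc j) ^ l * Z p μc μd μu ((K : ℤ) - k - l)) := by
  by_cases hkl : k + l ≤ K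
  · obtain ⟨K', rfl⟩ : ∃ K', K = (K' + l) + k := ⟨K - k - l, by omega⟩
    have h := sum_cshift p μc μd μu i k (K' + l)
      (fun x => if l ≤ x.c j then (1 : ℝ) else 0)
    rw [Finset.sum_congr rfl (fun x _ => by
      by_cases h1 : k ≤ x.c i
      · by_cases h2 : l ≤ x.c j
        · rw [if_pos ⟨h1, h2⟩, if_pos h1, if_pos h2, one_mul]
        · rw [if_neg (by tauto), if_pos h1, if_neg h2, zero_mul]
      · rw [if_neg (by tauto), if_neg h1] :
      ∀ x ∈ SB (K' + l + k), (if k ≤ x.c i ∧ l ≤ x.c j then w p μc μd μu x else 0) =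
        (if k ≤ x.c i then
          (if l ≤ x.c j then (1 : ℝ) else 0) * w p μc μd μu x else 0)), h]
    congr 1
    rw [Finset.sum_congr rfl (fun y _ => by
      rw [cAdd_c_ne i j (Ne.symm hij) k y]
      by_cases h2 : l ≤ y.c j
      · rw [if_pos h2, if_pos h2, one_mul]
      · rw [if_neg h2, if_neg h2, zero_mul] :
      ∀ y ∈ SB (K' + l), (if l ≤ (cAdd i k y).c j then (1 : ℝ) else 0) * w p μc μd μu y =
        (if l ≤ y.c j then w p μc μd μu y else 0))]
    rw [L_cind p μc μd μu j l (K' + l)]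
    congr 2
    push_cast; ring
  · rw [Z_neg p μc μd μu (by omega), mul_zero, mul_zero, Finset.sum_eq_zero]
    intro x hx
    rw [if_neg]
    have h2 := cc_le_total i j hij x
    rw [mem_SB.mp hx] at h2
    omega

lemma L_cc_ne (i j : Fin n) (hij : i ≠ j) (K : ℕ) :
    ∑ x ∈ SB K, (x.c i : ℝ) * (x.c j : ℝ) * w p μc μd μu x =
      ∑ k ∈ Finset.Icc 1 K, ∑ l ∈ Finset.Icc 1 (K - k),
        (p i / μc i) ^ k * (p j / μc j) ^ l * Z p μc μd μu ((K : ℤ) - k - l) := by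
  have hpt : ∀ x ∈ SB K, (x.c i : ℝ) * (x.c j : ℝ) * w p μc μd μu x =
      ∑ k ∈ Finset.Icc 1 K, ∑ l ∈ Finset.Icc 1 K,
        (if k ≤ x.c i ∧ l ≤ x.c j then w p μc μd μu x else 0) := by
    intro x hx
    have hci : x.c i ≤ K := by
      have h2 := (coord_le_total x i).2.1; rw [mem_SB.mp hx] at h2; exact h2
    have hcj : x.c j ≤ K := by
      have h2 := (coord_le_total x j).2.1; rw [mem_SB.mp hx] at h2; exact h2
    rw [← count_le (x.c i) K hci, ← count_le (x.c j) K hcj, Finset.sum_mul_sum,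
      Finset.sum_mul]
    refine Finset.sum_congr rfl (fun k _ => ?_)
    rw [Finset.sum_mul]
    refine Finset.sum_congr rfl (fun l _ => ?_)
    by_cases h1 : k ≤ x.c i <;> by_cases h2 : l ≤ x.c j <;>
      simp [h1, h2]
  rw [Finset.sum_congr rfl hpt, Finset.sum_comm]
  refine Finset.sum_congr rfl (fun k hk => ?_)
  rw [Finset.sum_comm]
  have hstep : ∑ l ∈ Finset.Icc 1 K,
      ∑ x ∈ SB K, (if k ≤ x.c i ∧ l ≤ x.c j then w p μc μd μu x else 0) =
      ∑ l ∈ Finset.Icc 1 K,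
        (p i / μc i) ^ k * (p j / μc j) ^ l * Z p μc μd μu ((K : ℤ) - k - l) := by
    refine Finset.sum_congr rfl (fun l _ => ?_)
    rw [L_cind2 p μc μd μu i j hij k l K]; ring
  rw [hstep]
  have hk' := Finset.mem_Icc.mp hk
  rw [← Finset.sum_subset (Finset.Icc_subset_Icc_right (by omega : K - k ≤ K))
    (fun l hl1 hl2 => by
      have h1 := Finset.mem_Icc.mp hl1
      have h2 : ¬ (1 ≤ l ∧ l ≤ K - k) := fun hc => hl2 (Finset.mem_Icc.mpr hc)
      rw [Z_neg p μc μd μu (by omega), mul_zero])]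

lemma L_cd (i j : Fin n) (K : ℕ) :
    ∑ x ∈ SB K, (x.c i : ℝ) * (x.d j : ℝ) * w p μc μd μu x =
      (p j / μd j) * ∑ k ∈ Finset.Icc 1 (K - 1),
        (p i / μc i) ^ k * Z p μc μd μu ((K : ℤ) - 1 - k) := by
  cases K with
  | zero =>
    rw [Finset.sum_eq_zero (fun x hx => by rw [SB_zero_c hx i]; push_cast; ring)]
    simp
  | succ K' =>
    have h := sum_dshift p μc μd μu j K' (fun x => (x.c i : ℝ))
    rw [Finset.sum_congr rfl (fun x _ =>
      show (x.c i : ℝ) * (x.d j : ℝ) * w p μc μd μu x =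
        (x.d j : ℝ) * (x.c i : ℝ) * w p μc μd μu x by ring), h]
    have hc : ∀ y : St n, ((dAdd j y).c i : ℝ) = (y.c i : ℝ) := fun y => rfl
    simp only [hc]
    rw [L_c, show K' + 1 - 1 = K' by omega,
      show ((K' + 1 : ℕ) : ℤ) - 1 = ((K' : ℕ) : ℤ) by push_cast; ring]

lemma L_cu (i j : Fin n) (K : ℕ) :
    ∑ x ∈ SB K, (x.c i : ℝ) * (x.u j : ℝ) * w p μc μd μu x =
      (p j / μu j) * ∑ k ∈ Finset.Icc 1 (K - 1),
        (p i / μc i) ^ k * Z p μc μd μu ((K : ℤ) - 1 - k) := by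
  cases K with
  | zero =>
    rw [Finset.sum_eq_zero (fun x hx => by rw [SB_zero_c hx i]; push_cast; ring)]
    simp
  | succ K' =>
    have h := sum_ushift p μc μd μu j K' (fun x => (x.c i : ℝ))
    rw [Finset.sum_congr rfl (fun x _ =>
      show (x.c i : ℝ) * (x.u j : ℝ) * w p μc μd μu x =
        (x.u j : ℝ) * (x.c i : ℝ) * w p μc μd μu x by ring), h]
    have hc : ∀ y : St n, ((uAdd j y).c i : ℝ) = (y.c i : ℝ) := fun y => rfl
    simp only [hc]
    rw [L_c, show K' + 1 - 1 = K' by omega,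
      show ((K' + 1 : ℕ) : ℤ) - 1 = ((K' : ℕ) : ℤ) by push_cast; ring]

lemma Z_pos (hp : ∀ i, 0 < p i) (hμc : ∀ i, 0 < μc i) (hμd : ∀ i, 0 < μd i)
    (hμu : ∀ i, 0 < μu i) (i0 : Fin n) (K : ℕ) :
    0 < Z p μc μd μu (K : ℤ) := by
  rw [Z_ofNat]
  refine Finset.sum_pos (fun x _ => w_pos p μc μd μu hp hμc hμd hμu x) ?_
  refine ⟨⟨0, Function.update 0 i0 K, 0⟩, mem_SB.mpr ?_⟩
  rw [total_eq]
  simp only [Finset.sum_update_of_mem (Finset.mem_univ i0)]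
  simp

end StAux

open StAux in
/-- Mixed second moments under `π_{m-1}`:
`Σ_{s,r ∈ {c,d,u}} E[x^s_i x^r_j] = α_{i,j} + β_{i,2} γ_j + β_{j,2} γ_i + ψ_{i,j}`. -/
theorem stmt6 (n m : ℕ) (hn : 1 ≤ n) (hm : 1 ≤ m)
    (p μc μd μu : Fin n → ℝ)
    (hp : ∀ i, 0 < p i)
    (hμc : ∀ i, 0 < μc i) (hμd : ∀ i, 0 < μd i) (hμu : ∀ i, 0 < μu i)
    (i j : Fin n) :
    (∑ s : Fin 3, ∑ r : Fin 3,
        Epi p μc μd μu ((m : ℤ) - 1) (fun x => ((coord s x i : ℝ) * (coord r x j : ℝ)))) =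
      (if i = j then
          ∑ k ∈ Finset.Icc 1 (m - 1),
            (2 * (k : ℝ) - 1) * (p i / μc i) ^ k *
              (Z p μc μd μu ((m : ℤ) - 1 - k) / Z p μc μd μu ((m : ℤ) - 1))
        else
          ∑ k ∈ Finset.Icc 1 (m - 1), ∑ l ∈ Finset.Icc 1 (m - 1 - k),
            (p i / μc i) ^ k * (p j / μc j) ^ l *
              (Z p μc μd μu ((m : ℤ) - 1 - k - l) / Z p μc μd μu ((m : ℤ) - 1))) +
      (∑ k ∈ Finset.Icc 1 (m - 2),
          (p i / μc i) ^ k * (Z p μc μd μu ((m : ℤ) - 2 - k) / Z p μc μd μu ((m : ℤ) - 1))) *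
        (p j * (1 / μd j + 1 / μu j)) +
      (∑ k ∈ Finset.Icc 1 (m - 2),
          (p j / μc j) ^ k * (Z p μc μd μu ((m : ℤ) - 2 - k) / Z p μc μd μu ((m : ℤ) - 1))) *
        (p i * (1 / μd i + 1 / μu i)) +
      (p i * (1 / μd i + 1 / μu i) / Z p μc μd μu ((m : ℤ) - 1)) *
        (p j * (1 / μd j + 1 / μu j) * Z p μc μd μu ((m : ℤ) - 3) +
          (if i = j then (1 : ℝ) else 0) * Z p μc μd μu ((m : ℤ) - 2)) := by
  obtain ⟨K, rfl⟩ : ∃ K, m = K + 1 := ⟨m - 1, by omega⟩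
  have e1 : ((K + 1 : ℕ) : ℤ) - 1 = ((K : ℕ) : ℤ) := by push_cast; ring
  have e2 : ((K + 1 : ℕ) : ℤ) - 2 = ((K : ℕ) : ℤ) - 1 := by push_cast; ring
  have e3 : ((K + 1 : ℕ) : ℤ) - 3 = ((K : ℕ) : ℤ) - 2 := by push_cast; ring
  rw [e1, e2, e3, show K + 1 - 1 = K from rfl, show K + 1 - 2 = K - 1 by omega]
  have hZ : 0 < Z p μc μd μu ((K : ℕ) : ℤ) := Z_pos p μc μd μu hp hμc hμd hμu i K
  have hZne : Z p μc μd μu ((K : ℕ) : ℤ) ≠ 0 := hZ.ne'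
  simp only [Epi_eq p μc μd μu K]
  simp only [← Finset.sum_div]
  have hnum : (∑ s : Fin 3, ∑ r : Fin 3, ∑ x ∈ SB K,
      ((coord s x i : ℝ) * (coord r x j : ℝ)) * w p μc μd μu x) =
      ∑ x ∈ SB K,
        (((x.c i : ℝ) + (x.d i : ℝ) + (x.u i : ℝ)) *
          ((x.c j : ℝ) + (x.d j : ℝ) + (x.u j : ℝ))) * w p μc μd μu x := by
    rw [Finset.sum_congr rfl (fun s _ => Finset.sum_comm), Finset.sum_comm]
    refine Finset.sum_congr rfl (fun x _ => ?_)
    have c0 : ∀ (y : St n) (i' : Fin n), coord 0 y i' = y.c i' := fun _ _ => rfl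
    have c1 : ∀ (y : St n) (i' : Fin n), coord 1 y i' = y.d i' := fun _ _ => rfl
    have c2 : ∀ (y : St n) (i' : Fin n), coord 2 y i' = y.u i' := fun _ _ => rfl
    simp only [Fin.sum_univ_three, c0, c1, c2]
    ring
  rw [hnum]
  have hexp : ∀ x ∈ SB K,
      (((x.c i : ℝ) + (x.d i : ℝ) + (x.u i : ℝ)) *
        ((x.c j : ℝ) + (x.d j : ℝ) + (x.u j : ℝ))) * w p μc μd μu x =
      (x.c i : ℝ) * (x.c j : ℝ) * w p μc μd μu x +
      ((x.c i : ℝ) * (x.d j : ℝ) * w p μc μd μu x +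
      ((x.c i : ℝ) * (x.u j : ℝ) * w p μc μd μu x +
      ((x.c j : ℝ) * (x.d i : ℝ) * w p μc μd μu x +
      ((x.c j : ℝ) * (x.u i : ℝ) * w p μc μd μu x +
      ((x.d i : ℝ) * (x.d j : ℝ) * w p μc μd μu x +
      ((x.d i : ℝ) * (x.u j : ℝ) * w p μc μd μu x +
      ((x.d j : ℝ) * (x.u i : ℝ) * w p μc μd μu x +
      (x.u i : ℝ) * (x.u j : ℝ) * w p μc μd μu x))))))) := fun x _ => by ring
  rw [Finset.sum_congr rfl hexp]
  simp only [Finset.sum_add_distrib]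
  rw [L_cd p μc μd μu i j K, L_cu p μc μd μu i j K, L_cd p μc μd μu j i K,
    L_cu p μc μd μu j i K, L_dd p μc μd μu i j K, L_du p μc μd μu i j K,
    L_du p μc μd μu j i K, L_uu p μc μd μu i j K]
  by_cases hij : i = j
  · subst hij
    rw [L_cc_eq p μc μd μu i K]
    simp only [eq_self_iff_true, if_true]
    simp only [div_mul_eq_mul_div, ← mul_div_assoc, ← Finset.sum_div, ← add_div]
    rw [div_eq_div_iff hZne hZne]
    ring
  · rw [L_cc_ne p μc μd μu i j hij K]
    simp only [if_neg hij]
    simp only [div_mul_eq_mul_div, ← mul_div_assoc, ← Finset.sum_div, ← add_div]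
    rw [div_eq_div_iff hZne hZne]
    ring
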